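/- The Lie antialgebra asl₂ has no nontrivial finite-dimensional representations: if V is a finite-dimensional vector space over ℂ and A, B, E ∈ End(V) satisfy AB - BA = E, AE + EA = A, BE + EB = B, E² = E, and V is irreducible (V has no proper nonzero subspace invariant under A, B, and E), then A = B = E = 0 and dim V ≤ 1. -/

import Mathlib

theorem stmt_9 (V : Type*) [AddCommGroup V] [Module ℂ V] [FiniteDimensional ℂ V]
    (A B E : Module.End ℂ V)
    (h1 : A * B - B * A = E) (h2 : A * E + E * A = A)
    (h3 : B * E + E * B = B) (h4 : E * E = E)
    (hirr : ∀ W : Submodule ℂ V,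
      (∀ v ∈ W, A v ∈ W) → (∀ v ∈ W, B v ∈ W) → (∀ v ∈ W, E v ∈ W) →
      W = ⊥ ∨ W = ⊤) :
    A = 0 ∧ B = 0 ∧ E = 0 ∧ Module.finrank ℂ V ≤ 1 := by
  -- trace of E is zero since E is a commutator
  have htr : LinearMap.trace ℂ V E = 0 := by
    rw [← h1]
    simp [LinearMap.trace_mul_comm ℂ A B]
  -- E is a projection, so its trace equals the rank
  obtain ⟨p, hp⟩ := (LinearMap.isProj_iff_isIdempotentElem E).mpr h4
  have hrank : (Module.finrank ℂ p : ℂ) = 0 := by rw [← hp.trace, htr]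
  have hrank0 : Module.finrank ℂ p = 0 := by exact_mod_cast hrank
  have hpbot : p = ⊥ := Submodule.finrank_eq_zero.mp hrank0
  have hE : E = 0 := by
    ext v
    have := hp.map_mem v
    rw [hpbot] at this
    simpa using this
  have hA : A = 0 := by rw [← h2, hE]; simp
  have hB : B = 0 := by rw [← h3, hE]; simp
  refine ⟨hA, hB, hE, ?_⟩
  by_cases hV : Module.finrank ℂ V = 0
  · omega
  · -- V nonzero; pick any nonzero vector, its span is invariant hence ⊤
    have : Nontrivial V := Module.nontrivial_of_finrank_pos (Nat.pos_of_ne_zero hV)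
    obtain ⟨v, hv⟩ := exists_ne (0 : V)
    have hinv : ∀ C : Module.End ℂ V, C = 0 → ∀ w ∈ Submodule.span ℂ {v}, C w ∈ Submodule.span ℂ {v} := by
      rintro C rfl w _; simp
    rcases hirr (Submodule.span ℂ {v}) (hinv A hA) (hinv B hB) (hinv E hE) with h | h
    · exact absurd (Submodule.span_eq_bot.mp h v rfl) hv
    · rw [← finrank_top ℂ V, ← h]
      exact (finrank_span_singleton hv).le
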